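/- Let k > ℓ > 1 and let the set of students be partitioned into sincere students N (who play truthfully) and sophisticated students M (who best respond). For any problem (P,≻,q) where all schools have a common priority order, the Nash equilibrium outcome of the game (SD^ℓ, P) — namely SD(P^ℓ_N, P_M, ≻, q) — has at least as many blocking students under (P,≻,q) as the Nash equilibrium outcome of the game (SD^k, P) — namely SD(P^k_N, P_M, ≻, q). -/

import Mathlib

/-!
School choice framework following Bonkoungou–Nesterov,
"Reforms meet fairness concerns in school and college admissions".

Students `I` and schools `S` are finite types with `|I| > |S|`.
A strict preference relation of a student over `S ∪ {∅}` is represented by a list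
of `Option S` containing every element exactly once (earlier = more preferred);
`none` is the outside option.  A strict priority order of a school is a list of
`I` containing every student exactly once (earlier = higher priority).
-/

namespace SchoolChoice

variable {I S : Type*} [Fintype I] [DecidableEq I] [Fintype S] [DecidableEq S]

/-- `p` is a strict preference relation on `S ∪ {∅}`: a ranking list containing every
element of `Option S` exactly once. -/
def ValidPref (p : List (Option S)) : Prop := p.Nodup ∧ ∀ x : Option S, x ∈ p

/-- `pr` is a strict priority order: a ranking list containing every student exactly once. -/
def ValidPrio (pr : List I) : Prop := pr.Nodup ∧ ∀ i : I, i ∈ pr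

/-- `a` is strictly preferred to `b` under the preference relation `p`. -/
def prefLt (p : List (Option S)) (a b : Option S) : Prop := p.idxOf a < p.idxOf b

/-- `i` has strictly higher priority than `j` under the priority order `pr`. -/
def prioLt (pr : List I) (i j : I) : Prop := pr.idxOf i < pr.idxOf j

instance (p : List (Option S)) (a b : Option S) : Decidable (prefLt p a b) :=
  inferInstanceAs (Decidable (_ < _))

instance (pr : List I) (i j : I) : Decidable (prioLt pr i j) :=
  inferInstanceAs (Decidable (_ < _))

/-- The acceptable schools of `p` (those preferred to the outside option), in preference
order. -/
def acceptables (p : List (Option S)) : List S := (p.takeWhile Option.isSome).filterMap id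

/-- The truncation of `p` after its `k`-th acceptable school: the preference relation
listing, in the same order, only the `min k _` most-preferred acceptable schools of `p`,
all other schools being unacceptable (kept below `none` in their original order). -/
def truncate (p : List (Option S)) (k : ℕ) : List (Option S) :=
  ((acceptables p).take k).map some ++
    none :: p.filter (fun x => decide (x ≠ none ∧ x ∉ ((acceptables p).take k).map some))

/-- `μ` is a matching: it respects the capacities `q`. -/
def IsMatching (q : S → ℕ) (μ : I → Option S) : Prop :=
  ∀ s : S, (Finset.univ.filter (fun i => μ i = some s)).card ≤ q s

/-- The pair `(i, s)` blocks `μ` under the problem `(P, prio, q)`. -/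
def Blocks (P : I → List (Option S)) (prio : S → List I) (q : S → ℕ)
    (μ : I → Option S) (i : I) (s : S) : Prop :=
  prefLt (P i) (some s) (μ i) ∧
    ((Finset.univ.filter (fun j => μ j = some s)).card < q s ∨
      ∃ j : I, μ j = some s ∧ prioLt (prio s) i j)

/-- `i` is a blocking student for `μ` under `(P, prio, q)`. -/
def BlockingStudent (P : I → List (Option S)) (prio : S → List I) (q : S → ℕ)
    (μ : I → Option S) (i : I) : Prop :=
  ∃ s : S, Blocks P prio q μ i s

/-- `μ` is individually rational under `P`. -/
def IndividuallyRational (P : I → List (Option S)) (μ : I → Option S) : Prop :=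
  ∀ i : I, ¬ prefLt (P i) none (μ i)

/-- `μ` is stable at `(P, prio, q)`. -/
def IsStable (P : I → List (Option S)) (prio : S → List I) (q : S → ℕ)
    (μ : I → Option S) : Prop :=
  IndividuallyRational P μ ∧ ∀ i : I, ¬ BlockingStudent P prio q μ i

/-- The number of blocking students for `μ` under `(P, prio, q)`. -/
noncomputable def numBlocking (P : I → List (Option S)) (prio : S → List I) (q : S → ℕ)
    (μ : I → Option S) : ℕ :=
  {i : I | BlockingStudent P prio q μ i}.ncard

/-! ### The Gale–Shapley student-proposing deferred acceptance mechanism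

The state `σ : I → ℕ` records, for each student, how many of her acceptable schools
have already rejected her; she currently applies to the `σ i`-th school on her list
(if any).  At each round every school tentatively keeps the `q s` highest-priority
students among its current applicants and rejects the rest, who move on. -/

/-- The school student `i` currently applies to. -/
def daTarget (P : I → List (Option S)) (σ : I → ℕ) (i : I) : Option S :=
  (acceptables (P i))[σ i]?

/-- The students tentatively held by school `s`: the `q s` highest-priority current
applicants. -/
def daHeld (P : I → List (Option S)) (prio : S → List I) (q : S → ℕ)
    (σ : I → ℕ) (s : S) : List I :=
  ((prio s).filter (fun i => decide (daTarget P σ i = some s))).take (q s)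

/-- One round of deferred acceptance: every rejected student moves to her next choice. -/
def daStep (P : I → List (Option S)) (prio : S → List I) (q : S → ℕ)
    (σ : I → ℕ) : I → ℕ := fun i =>
  match daTarget P σ i with
  | none => σ i
  | some s => if i ∈ daHeld P prio q σ s then σ i else σ i + 1

/-- The Gale–Shapley (student-proposing deferred acceptance) mechanism.  Iterating the
round map `|I| * |S| + 1` times is guaranteed to reach the terminal state. -/
def GS (P : I → List (Option S)) (prio : S → List I) (q : S → ℕ) : I → Option S :=
  fun i =>
    let σ := (daStep P prio q)^[Fintype.card I * Fintype.card S + 1] (fun _ => 0)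
    match daTarget P σ i with
    | none => none
    | some s => if i ∈ daHeld P prio q σ s then some s else none

/-- The constrained Gale–Shapley mechanism `GS^k`. -/
def GSk (k : ℕ) (P : I → List (Option S)) (prio : S → List I) (q : S → ℕ) : I → Option S :=
  GS (fun i => truncate (P i) k) prio q

/-! ### The Boston (immediate acceptance) mechanism -/

/-- Round `t` of the Boston mechanism: each not-yet-accepted student applies to her
`t`-th ranked acceptable school (0-indexed), and each school permanently accepts, up to
its remaining capacity, its highest-priority new applicants. -/
def bostonRound (P : I → List (Option S)) (prio : S → List I) (q : S → ℕ)
    (μ : I → Option S) (t : ℕ) : I → Option S := fun i =>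
  match μ i with
  | some s => some s
  | none =>
    match (acceptables (P i))[t]? with
    | none => none
    | some s =>
      if i ∈ ((prio s).filter
            (fun j => decide (μ j = none ∧ (acceptables (P j))[t]? = some s))).take
          (q s - (Finset.univ.filter (fun j => μ j = some s)).card)
      then some s else none

/-- The Boston (immediate acceptance) mechanism. -/
def Boston (P : I → List (Option S)) (prio : S → List I) (q : S → ℕ) : I → Option S :=
  (List.range (Fintype.card S)).foldl (bostonRound P prio q) (fun _ => none)

/-- The constrained Boston mechanism `β^k`. -/
def Bostonk (k : ℕ) (P : I → List (Option S)) (prio : S → List I) (q : S → ℕ) :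
    I → Option S :=
  Boston (fun i => truncate (P i) k) prio q

/-! ### The first-preference-first mechanism -/

/-- The adjusted priority profile: each first-preference-first school (member of `fpf`)
ranks students first by the rank they assign to it under `P` (counting the ranking of the
outside option as well), ties broken by the original priority; equal-preference schools
keep their original priority. -/
def fpfPrio (fpf : Finset S) (P : I → List (Option S)) (prio : S → List I) : S → List I :=
  fun s =>
    if s ∈ fpf then
      (List.range (Fintype.card S + 1)).flatMap
        (fun r => (prio s).filter (fun i => decide ((P i).idxOf (some s) = r)))
    else prio s

/-- The first-preference-first mechanism with set `fpf` of first-preference-first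
schools: Gale–Shapley run on the adjusted priorities. -/
def FPF (fpf : Finset S) (P : I → List (Option S)) (prio : S → List I) (q : S → ℕ) :
    I → Option S :=
  GS P (fpfPrio fpf P prio) q

/-- The constrained first-preference-first mechanism `FPF^k`. -/
def FPFk (fpf : Finset S) (k : ℕ) (P : I → List (Option S)) (prio : S → List I)
    (q : S → ℕ) : I → Option S :=
  FPF fpf (fun i => truncate (P i) k) prio q

/-! ### Manipulation and equilibrium notions -/

/-- Student `i` is a manipulating student of the mechanism `φ` (with priorities and
capacities fixed) at the true profile `P`. -/
def ManipulatingStudent (φ : (I → List (Option S)) → I → Option S)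
    (P : I → List (Option S)) (i : I) : Prop :=
  ∃ Q : List (Option S), ValidPref Q ∧
    prefLt (P i) (φ (Function.update P i Q) i) (φ P i)

/-- The mechanism `φ` is not manipulable at `P`. -/
def NotManipulable (φ : (I → List (Option S)) → I → Option S)
    (P : I → List (Option S)) : Prop :=
  ∀ i : I, ¬ ManipulatingStudent φ P i

/-- `P'` is a Nash equilibrium of the game `(φ, P)` in which the sophisticated students
are the members of `M` (who may misreport, and best respond) and all other (sincere)
students report truthfully. -/
def NashEq (φ : (I → List (Option S)) → I → Option S) (P : I → List (Option S))
    (M : Finset I) (P' : I → List (Option S)) : Prop :=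
  (∀ i, ValidPref (P' i)) ∧ (∀ i ∉ M, P' i = P i) ∧
    ∀ i ∈ M, ∀ Q : List (Option S), ValidPref Q →
      ¬ prefLt (P i) (φ (Function.update P' i Q) i) (φ P' i)

/-! ### Semi-sophisticated students -/

/-- Student `i` is guaranteed her first choice `s`: `s` is her most-preferred acceptable
school and `i` is among the `q s` highest-priority students at `s`. -/
def GuaranteedFirstChoice (P : I → List (Option S)) (prio : S → List I) (q : S → ℕ)
    (i : I) (s : S) : Prop :=
  (acceptables (P i)).head? = some s ∧ (prio s).idxOf i < q s

instance (P : I → List (Option S)) (prio : S → List I) (q : S → ℕ) (i : I) (s : S) :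
    Decidable (GuaranteedFirstChoice P prio q i s) :=
  inferInstanceAs (Decidable (_ ∧ _))

/-- School `s` is competitive: at least `q s` students are guaranteed their first
choice `s`. -/
def Competitive (P : I → List (Option S)) (prio : S → List I) (q : S → ℕ) (s : S) : Prop :=
  q s ≤ (Finset.univ.filter (fun i => GuaranteedFirstChoice P prio q i s)).card

instance (P : I → List (Option S)) (prio : S → List I) (q : S → ℕ) (s : S) :
    Decidable (Competitive P prio q s) :=
  inferInstanceAs (Decidable (_ ≤ _))

/-- `P'` is a Nash equilibrium of the game `(GS^ℓ, P)` with semi-sophisticated students: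
every student guaranteed her first choice reports truthfully; every other student reports
truthfully if she has at most `ℓ` acceptable schools or all her acceptable schools are
competitive, and otherwise lists as acceptable, in the order given by her true preference,
only her acceptable schools that are not competitive. -/
def SemiSophProfile (ℓ : ℕ) (P : I → List (Option S)) (prio : S → List I) (q : S → ℕ)
    (P' : I → List (Option S)) : Prop :=
  ∀ i : I,
    ((∃ s : S, GuaranteedFirstChoice P prio q i s) → P' i = P i) ∧
    (¬ (∃ s : S, GuaranteedFirstChoice P prio q i s) →
      (((acceptables (P i)).length ≤ ℓ ∨ ∀ s ∈ acceptables (P i), Competitive P prio q s) →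
          P' i = P i) ∧
      (¬ ((acceptables (P i)).length ≤ ℓ ∨
            ∀ s ∈ acceptables (P i), Competitive P prio q s) →
          acceptables (P' i) =
            (acceptables (P i)).filter (fun s => decide (¬ Competitive P prio q s))))


/-! ### Generic `idxOf` lemmas (for arbitrary lawful `BEq` instances) -/

section IndexOfAux
variable {α : Type*} [BEq α] [LawfulBEq α] [DecidableEq α]

lemma idx_cons (a b : α) (l : List α) :
    (b :: l).idxOf a = if b = a then 0 else l.idxOf a + 1 := by
  rw [List.idxOf_cons]
  by_cases h : b = a
  · simp [h]
  · have : (b == a) = false := by simpa using h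
    simp [this, h]

lemma idx_append_mem {a : α} : ∀ {l1 : List α} (l2 : List α), a ∈ l1 →
    (l1 ++ l2).idxOf a = l1.idxOf a := by
  intro l1
  induction l1 with
  | nil => intro l2 h; simp at h
  | cons b l ih =>
    intro l2 h
    rw [List.cons_append, idx_cons, idx_cons]
    by_cases hb : b = a
    · simp [hb]
    · rw [if_neg hb, if_neg hb, ih l2 (by
        cases List.mem_cons.1 h with
        | inl h' => exact absurd h'.symm hb
        | inr h' => exact h')]

lemma idx_append_not_mem {a : α} : ∀ {l1 : List α} (l2 : List α), a ∉ l1 →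
    (l1 ++ l2).idxOf a = l1.length + l2.idxOf a := by
  intro l1
  induction l1 with
  | nil => intro l2 _; simp
  | cons b l ih =>
    intro l2 h
    rw [List.cons_append, idx_cons]
    have hb : ¬ b = a := fun hc => h (hc ▸ List.mem_cons_self)
    rw [if_neg hb, List.length_cons, ih l2 (fun hc => h (List.mem_cons_of_mem _ hc))]
    omega

lemma idx_le_length {a : α} {l : List α} : l.idxOf a ≤ l.length := by
  induction l with
  | nil => simp
  | cons b l ih =>
    rw [idx_cons]
    by_cases h : b = a
    · simp [h]
    · rw [if_neg h]; simpa using ih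

lemma idx_lt_length_iff {a : α} {l : List α} : l.idxOf a < l.length ↔ a ∈ l := by
  induction l with
  | nil => simp
  | cons b l ih =>
    rw [idx_cons]
    by_cases h : b = a
    · simp [h]
    · rw [if_neg h]
      simp only [List.length_cons, Nat.add_lt_add_iff_right, ih, List.mem_cons]
      constructor
      · exact Or.inr
      · rintro (h' | h')
        · exact absurd h'.symm h
        · exact h'

lemma idx_getElem? {a : α} {l : List α} (h : a ∈ l) :
    l[l.idxOf a]? = some a := by
  induction l with
  | nil => simp at h
  | cons b l ih =>
    rw [idx_cons]
    by_cases hb : b = a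
    · simp [hb]
    · rw [if_neg hb]
      simp only [List.getElem?_cons_succ]
      exact ih (by
        cases List.mem_cons.1 h with
        | inl h' => exact absurd h'.symm hb
        | inr h' => exact h')

lemma idx_getElem {l : List α} (h : l.Nodup) (n : ℕ) (hn : n < l.length) :
    l.idxOf (l[n]) = n := by
  induction l generalizing n with
  | nil => simp at hn
  | cons b l ih =>
    cases n with
    | zero => simp [idx_cons]
    | succ n =>
      have hn' : n < l.length := by simpa using hn
      rw [List.getElem_cons_succ, idx_cons]
      have hbl : b ∉ l := (List.nodup_cons.1 h).1
      have hmem : l[n]'hn' ∈ l := List.getElem_mem hn'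
      rw [if_neg (fun hc : b = l[n]'hn' => hbl (hc ▸ hmem)),
        ih (List.nodup_cons.1 h).2 n hn']

lemma getElem?_eq_some_idx {l : List α} {n : ℕ} {a : α} (h : l.Nodup)
    (hg : l[n]? = some a) : l.idxOf a = n := by
  have hn : n < l.length := by
    by_contra hc
    rw [List.getElem?_eq_none (le_of_not_gt hc)] at hg
    exact nomatch hg
  have : l[n] = a := by rw [List.getElem?_eq_getElem hn] at hg; exact Option.some.inj hg
  rw [← this, idx_getElem h n hn]

lemma mem_of_getElem?_eq_some {l : List α} {n : ℕ} {a : α} (hg : l[n]? = some a) :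
    a ∈ l := by
  have hn : n < l.length := by
    by_contra hc
    rw [List.getElem?_eq_none (le_of_not_gt hc)] at hg
    exact nomatch hg
  rw [List.getElem?_eq_getElem hn] at hg
  exact (Option.some.inj hg) ▸ List.getElem_mem _

end IndexOfAux

/-! ### Acceptable-list structure lemmas -/

lemma filterMap_id_map_some : ∀ (w : List (Option S)), (∀ x ∈ w, x.isSome) →
    (w.filterMap id).map some = w := by
  intro w
  induction w with
  | nil => intro _; simp
  | cons x w ih =>
    intro h
    obtain ⟨y, rfl⟩ := Option.isSome_iff_exists.1 (h x (List.mem_cons_self))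
    simp only [List.filterMap_cons, id]
    exact congrArg (some y :: ·) (ih (fun z hz => h z (List.mem_cons_of_mem _ hz)))

lemma map_some_acceptables (p : List (Option S)) :
    (acceptables p).map some = p.takeWhile Option.isSome :=
  filterMap_id_map_some _ (fun _ hx => List.mem_takeWhile_imp hx)

lemma idxOf_map_some (l : List S) (s : S) :
    (l.map some).idxOf (some s) = l.idxOf s := by
  induction l with
  | nil => simp
  | cons x l ih =>
    rw [List.map_cons, idx_cons, idx_cons]
    by_cases h : x = s
    · simp [h]
    · rw [if_neg h, if_neg (fun hc => h (Option.some.inj hc)), ih]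

lemma mem_acceptables_iff_some_mem_takeWhile {p : List (Option S)} {s : S} :
    s ∈ acceptables p ↔ some s ∈ p.takeWhile Option.isSome := by
  rw [← map_some_acceptables]
  simp

lemma takeWhile_append_dropWhile' (p : List (Option S)) :
    p = p.takeWhile Option.isSome ++ p.dropWhile Option.isSome :=
  (List.takeWhile_append_dropWhile).symm

lemma none_not_mem_takeWhile (p : List (Option S)) :
    (none : Option S) ∉ p.takeWhile Option.isSome := by
  intro h
  simpa using List.mem_takeWhile_imp h

lemma takeWhile_append_cons_true {α : Type*} (f : α → Bool) :
    ∀ (l1 : List α) (x : α) (l2 : List α), (∀ y ∈ l1, f y = true) → f x = true →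
      (l1 ++ x :: l2).takeWhile f = l1 ++ x :: l2.takeWhile f := by
  intro l1
  induction l1 with
  | nil => intro x l2 _ hx; simp [List.takeWhile_cons, hx]
  | cons a l ih =>
    intro x l2 h hx
    have ha : f a = true := h a (List.mem_cons_self)
    simp only [List.cons_append, List.takeWhile_cons, ha, if_true]
    rw [ih x l2 (fun y hy => h y (List.mem_cons_of_mem _ hy)) hx]

lemma takeWhile_append_cons {α : Type*} (f : α → Bool) :
    ∀ (l1 : List α) (x : α) (l2 : List α), (∀ y ∈ l1, f y = true) → f x = false →
      (l1 ++ x :: l2).takeWhile f = l1 := by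
  intro l1
  induction l1 with
  | nil => intro x l2 _ hx; simp [List.takeWhile_cons, hx]
  | cons a l ih =>
    intro x l2 h hx
    have ha : f a = true := h a (List.mem_cons_self)
    simp only [List.cons_append, List.takeWhile_cons, ha, if_true]
    rw [ih x l2 (fun y hy => h y (List.mem_cons_of_mem _ hy)) hx]

lemma idxOf_some_of_acc {p : List (Option S)} {s : S} (h : s ∈ acceptables p) :
    p.idxOf (some s) = (acceptables p).idxOf s := by
  conv_lhs => rw [takeWhile_append_dropWhile' p]
  rw [idx_append_mem _ (mem_acceptables_iff_some_mem_takeWhile.1 h),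
    ← map_some_acceptables, idxOf_map_some]

lemma idxOf_none_eq {p : List (Option S)} (hp : ValidPref p) :
    p.idxOf (none : Option S) = (acceptables p).length := by
  conv_lhs => rw [takeWhile_append_dropWhile' p]
  rw [idx_append_not_mem _ (none_not_mem_takeWhile p)]
  have hlen : (p.takeWhile Option.isSome).length = (acceptables p).length := by
    rw [← map_some_acceptables]; simp
  rw [hlen]
  have hd : (p.dropWhile Option.isSome).idxOf (none : Option S) = 0 := by
    cases hdw : p.dropWhile Option.isSome with
    | nil =>
      exfalso
      have : (none : Option S) ∈ p := hp.2 none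
      rw [takeWhile_append_dropWhile' p, hdw, List.append_nil] at this
      exact none_not_mem_takeWhile p this
    | cons x d =>
      have hxn : x = none := by
        cases x with
        | none => rfl
        | some y =>
          exfalso
          have hw : p.takeWhile Option.isSome =
              p.takeWhile Option.isSome ++ some y :: (d.takeWhile Option.isSome) := by
            conv_lhs => rw [takeWhile_append_dropWhile' p, hdw]
            exact takeWhile_append_cons_true _ _ _ _
              (fun z hz => List.mem_takeWhile_imp hz) rfl
          have := congrArg List.length hw
          simp at this
      rw [hxn, idx_cons, if_pos rfl]
  omega

lemma mem_acceptables_iff_lt_none {p : List (Option S)} (hp : ValidPref p) {s : S} :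
    s ∈ acceptables p ↔ p.idxOf (some s) < p.idxOf (none : Option S) := by
  constructor
  · intro h
    rw [idxOf_some_of_acc h, idxOf_none_eq hp]
    exact idx_lt_length_iff.2 h
  · intro h
    by_contra hs
    have : (acceptables p).length ≤ p.idxOf (some s) := by
      conv_rhs => rw [takeWhile_append_dropWhile' p]
      rw [idx_append_not_mem _ (fun hc => hs (mem_acceptables_iff_some_mem_takeWhile.2 hc))]
      have hlen : (p.takeWhile Option.isSome).length = (acceptables p).length := by
        rw [← map_some_acceptables]; simp
      omega
    rw [idxOf_none_eq hp] at h
    omega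

lemma acc_idxOf_lt_iff {p : List (Option S)} (hp : ValidPref p) {u v : S}
    (hu : u ∈ acceptables p) (hv : v ∈ acceptables p) :
    (acceptables p).idxOf u < (acceptables p).idxOf v ↔ prefLt p (some u) (some v) := by
  rw [prefLt, idxOf_some_of_acc hu, idxOf_some_of_acc hv]

lemma prefLt_of_acc_notacc {p : List (Option S)} (hp : ValidPref p) {x s : S}
    (hx : x ∈ acceptables p) (hs : s ∉ acceptables p) :
    prefLt p (some x) (some s) := by
  have h1 : p.idxOf (some x) < p.idxOf (none : Option S) :=
    (mem_acceptables_iff_lt_none hp).1 hx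
  have h2 : ¬ p.idxOf (some s) < p.idxOf (none : Option S) :=
    fun hc => hs ((mem_acceptables_iff_lt_none hp).2 hc)
  exact lt_of_lt_of_le h1 (le_of_not_gt h2)

lemma acceptables_nodup {p : List (Option S)} (hp : ValidPref p) :
    (acceptables p).Nodup := by
  have h1 : (p.takeWhile Option.isSome).Nodup :=
    hp.1.sublist (List.takeWhile_sublist _)
  rw [← map_some_acceptables] at h1
  exact h1.of_map some

lemma acceptables_truncate (p : List (Option S)) (k : ℕ) :
    acceptables (truncate p k) = (acceptables p).take k := by
  unfold truncate acceptables
  rw [takeWhile_append_cons _ _ _ _ (fun y hy => by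
      obtain ⟨s, _, rfl⟩ := List.mem_map.1 hy
      rfl) rfl]
  rw [List.filterMap_map]
  have : (id ∘ some : S → Option S) = some := rfl
  rw [this, List.filterMap_some]

/-! ### Deferred-acceptance analysis -/

/-- Number of students with priority-index `< n` matched to `s` by `μ`. -/
def cntB (pr : List I) (μ : I → Option S) (n : ℕ) (s : S) : ℕ :=
  (Finset.univ.filter (fun j => pr.idxOf j < n ∧ μ j = some s)).card

lemma cntB_mono_n (pr : List I) (μ : I → Option S) {n n' : ℕ} (h : n ≤ n') (s : S) :
    cntB pr μ n s ≤ cntB pr μ n' s := by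
  apply Finset.card_le_card
  intro x hx
  rw [Finset.mem_filter] at hx ⊢
  exact ⟨hx.1, lt_of_lt_of_le hx.2.1 h, hx.2.2⟩

/-- `μ` is the common-priority serial-dictatorship ("greedy") outcome for the
reported profile `Q`. -/
def Greedy (pr : List I) (q : S → ℕ) (Q : I → List (Option S)) (μ : I → Option S) : Prop :=
  ∀ i : I, ∃ m, m ≤ (acceptables (Q i)).length ∧ μ i = (acceptables (Q i))[m]? ∧
    (∀ t, t < m → ∀ s, (acceptables (Q i))[t]? = some s →
      q s ≤ cntB pr μ (pr.idxOf i) s) ∧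
    (∀ s, (acceptables (Q i))[m]? = some s → cntB pr μ (pr.idxOf i) s < q s)

lemma fixed_of_bounded {α : Type*} (f : α → α) (x0 : α) (F : α → ℕ) (B : ℕ)
    (hmono : ∀ y, f y ≠ y → F y < F (f y)) (hbd : ∀ r : ℕ, F (f^[r] x0) ≤ B) :
    f (f^[B+1] x0) = f^[B+1] x0 := by
  have key : ∀ r : ℕ, (∃ m, m ≤ r ∧ f (f^[m] x0) = f^[m] x0) ∨ r ≤ F (f^[r] x0) := by
    intro r
    induction r with
    | zero => exact Or.inr (Nat.zero_le _)
    | succ r ih =>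
      by_cases hf : f (f^[r] x0) = f^[r] x0
      · exact Or.inl ⟨r, Nat.le_succ r, hf⟩
      · cases ih with
        | inl h =>
          obtain ⟨m, hm, hfix⟩ := h
          exact Or.inl ⟨m, hm.trans (Nat.le_succ r), hfix⟩
        | inr h =>
          refine Or.inr ?_
          have h2 := hmono _ hf
          rw [Function.iterate_succ_apply']
          omega
  cases key (B+1) with
  | inr h => exact absurd (h.trans (hbd (B+1))) (by omega)
  | inl h =>
    obtain ⟨m, hm, hfix⟩ := h
    have heq : f^[B+1] x0 = f^[m] x0 := by
      have hsplit : B+1 = (B+1-m) + m := by omega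
      rw [hsplit, Function.iterate_add_apply]
      exact Function.iterate_fixed hfix (B+1-m)
    rw [heq]
    exact hfix

lemma exists_increment (f : ℕ → ℕ) (h0 : f 0 = 0)
    (hstep : ∀ r, f (r+1) = f r ∨ f (r+1) = f r + 1) :
    ∀ (N t : ℕ), t < f N → ∃ r, r < N ∧ f r = t ∧ f (r+1) = f r + 1 := by
  intro N
  induction N with
  | zero => intro t ht; rw [h0] at ht; exact absurd ht (by omega)
  | succ N ih =>
    intro t ht
    cases hstep N with
    | inl h =>
      rw [h] at ht
      obtain ⟨r, hr, h1, h2⟩ := ih t ht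
      exact ⟨r, by omega, h1, h2⟩
    | inr h =>
      by_cases htN : t < f N
      · obtain ⟨r, hr, h1, h2⟩ := ih t htN
        exact ⟨r, by omega, h1, h2⟩
      · have heq : t = f N := by omega
        exact ⟨N, by omega, heq.symm, h⟩

section DA

variable (Q : I → List (Option S)) (prio : S → List I) (q : S → ℕ) (pr : List I)

lemma daTarget_def (σ : I → ℕ) (i : I) :
    daTarget Q σ i = (acceptables (Q i))[σ i]? := rfl

lemma daHeld_def (σ : I → ℕ) (s : S) :
    daHeld Q prio q σ s =
      ((prio s).filter (fun i => decide (daTarget Q σ i = some s))).take (q s) := rfl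

lemma daStep_eq_of_none {σ : I → ℕ} {i : I} (h : daTarget Q σ i = none) :
    daStep Q prio q σ i = σ i := by
  simp [daStep, h]

lemma daStep_eq_of_held {σ : I → ℕ} {i : I} {s : S} (h : daTarget Q σ i = some s)
    (hh : i ∈ daHeld Q prio q σ s) : daStep Q prio q σ i = σ i := by
  simp [daStep, h, hh]

lemma daStep_eq_of_rej {σ : I → ℕ} {i : I} {s : S} (h : daTarget Q σ i = some s)
    (hh : i ∉ daHeld Q prio q σ s) : daStep Q prio q σ i = σ i + 1 := by
  simp [daStep, h, hh]

lemma daStep_cases (σ : I → ℕ) (i : I) :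
    daStep Q prio q σ i = σ i ∨
      (daStep Q prio q σ i = σ i + 1 ∧
        ∃ s, daTarget Q σ i = some s ∧ i ∉ daHeld Q prio q σ s) := by
  cases h : daTarget Q σ i with
  | none => exact Or.inl (daStep_eq_of_none Q prio q h)
  | some s =>
    by_cases hh : i ∈ daHeld Q prio q σ s
    · exact Or.inl (daStep_eq_of_held Q prio q h hh)
    · exact Or.inr ⟨daStep_eq_of_rej Q prio q h hh, s, rfl, hh⟩

lemma daStep_iter_bound (r : ℕ) (i : I) :
    (daStep Q prio q)^[r] (fun _ => 0) i ≤ (acceptables (Q i)).length := by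
  induction r with
  | zero => simp
  | succ r ih =>
    rw [Function.iterate_succ_apply']
    set σ := (daStep Q prio q)^[r] (fun _ => 0) with hσ
    cases daStep_cases Q prio q σ i with
    | inl h => rw [h]; exact ih
    | inr h =>
      obtain ⟨heq, s, hs, -⟩ := h
      rw [heq]
      have hlt : σ i < (acceptables (Q i)).length := by
        by_contra hcon
        rw [daTarget_def, List.getElem?_eq_none (le_of_not_gt hcon)] at hs
        exact nomatch hs
      omega

lemma gs_fixed (hQn : ∀ i, (acceptables (Q i)).Nodup) :
    daStep Q prio q
        ((daStep Q prio q)^[Fintype.card I * Fintype.card S + 1] (fun _ => 0)) =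
      (daStep Q prio q)^[Fintype.card I * Fintype.card S + 1] (fun _ => 0) := by
  apply fixed_of_bounded (daStep Q prio q) (fun _ => 0) (fun σ => ∑ i : I, σ i)
    (Fintype.card I * Fintype.card S)
  · intro y hy
    apply Finset.sum_lt_sum
    · intro i _
      cases daStep_cases Q prio q y i with
      | inl h => omega
      | inr h => omega
    · obtain ⟨i, hi⟩ := Function.ne_iff.1 hy
      refine ⟨i, Finset.mem_univ i, ?_⟩
      cases daStep_cases Q prio q y i with
      | inl h => exact absurd h hi
      | inr h => omega
  · intro r
    calc ∑ i : I, (daStep Q prio q)^[r] (fun _ => 0) i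
        ≤ ∑ _i : I, Fintype.card S :=
          Finset.sum_le_sum (fun i _ =>
            (daStep_iter_bound Q prio q r i).trans ((hQn i).length_le_card))
      _ = Fintype.card I * Fintype.card S := by
          rw [Finset.sum_const, smul_eq_mul, Finset.card_univ]

lemma mem_daHeld_target {σ : I → ℕ} {s : S} {x : I} (hx : x ∈ daHeld Q prio q σ s) :
    daTarget Q σ x = some s := by
  have h1 : x ∈ (prio s).filter (fun i => decide (daTarget Q σ i = some s)) :=
    List.mem_of_mem_take hx
  rw [List.mem_filter] at h1
  exact of_decide_eq_true h1.2

lemma daHeld_nodup (hpr : ValidPrio pr) (hc : ∀ s, prio s = pr) (σ : I → ℕ) (s : S) :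
    (daHeld Q prio q σ s).Nodup := by
  rw [daHeld_def]
  have hn : (prio s).Nodup := by rw [hc s]; exact hpr.1
  exact (hn.filter _).sublist (List.take_sublist _ _)

lemma daHeld_length_le (σ : I → ℕ) (s : S) : (daHeld Q prio q σ s).length ≤ q s := by
  rw [daHeld_def, List.length_take]
  omega

lemma pairwise_idxOf_lt (hpr : ValidPrio pr) :
    pr.Pairwise (fun a b => pr.idxOf a < pr.idxOf b) := by
  rw [List.pairwise_iff_getElem]
  intro a b ha hb hab
  rw [idx_getElem hpr.1 a ha, idx_getElem hpr.1 b hb]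
  exact hab

lemma held_persist {σ : I → ℕ} {s : S} {x : I} (hx : x ∈ daHeld Q prio q σ s) :
    daTarget Q (daStep Q prio q σ) x = some s := by
  have ht := mem_daHeld_target Q prio q hx
  have hstep : daStep Q prio q σ x = σ x := daStep_eq_of_held Q prio q ht hx
  rw [daTarget_def] at ht ⊢
  rw [hstep]
  exact ht

lemma reject_full (hpr : ValidPrio pr) (hc : ∀ s, prio s = pr) (σ : I → ℕ) {s : S} {j : I}
    (hT : daTarget Q σ j = some s) (hnh : j ∉ daHeld Q prio q σ s) :
    (daHeld Q prio q σ s).toFinset.card = q s ∧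
      ∀ x ∈ daHeld Q prio q σ s, pr.idxOf x < pr.idxOf j := by
  set L := (prio s).filter (fun i => decide (daTarget Q σ i = some s)) with hL
  have hLpair : L.Pairwise (fun a b => pr.idxOf a < pr.idxOf b) := by
    have h0 : (prio s).Pairwise (fun a b => pr.idxOf a < pr.idxOf b) := by
      rw [hc s]; exact pairwise_idxOf_lt pr hpr
    exact h0.sublist (List.filter_sublist)
  have hjL : j ∈ L := List.mem_filter.2 ⟨by rw [hc s]; exact hpr.2 j, decide_eq_true hT⟩
  have hheld : daHeld Q prio q σ s = L.take (q s) := rfl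
  have hjdrop : j ∈ L.drop (q s) := by
    have h2 : j ∈ L.take (q s) ++ L.drop (q s) := by
      rw [List.take_append_drop]; exact hjL
    rcases List.mem_append.1 h2 with h3 | h3
    · exact absurd (hheld ▸ h3) hnh
    · exact h3
  have hlen : q s < L.length := by
    by_contra hcon
    rw [List.drop_eq_nil_of_le (le_of_not_gt hcon)] at hjdrop
    simp at hjdrop
  have hnodup : L.Nodup := by
    have : (prio s).Nodup := by rw [hc s]; exact hpr.1
    exact this.filter _
  constructor
  · rw [hheld, List.toFinset_card_of_nodup (hnodup.sublist (List.take_sublist _ _)),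
      List.length_take]
    omega
  · intro x hx
    have hpairsplit := List.pairwise_append.1
      ((List.take_append_drop (q s) L).symm ▸ hLpair)
    exact hpairsplit.2.2 x (hheld ▸ hx) j hjdrop

lemma min_tcnt_mono (hpr : ValidPrio pr) (hc : ∀ s, prio s = pr) (σ : I → ℕ) (s : S) (n : ℕ) :
    min (q s) (cntB pr (daTarget Q σ) n s) ≤
      min (q s) (cntB pr (daTarget Q (daStep Q prio q σ)) n s) := by
  by_cases hall : ∀ j, pr.idxOf j < n → daTarget Q σ j = some s →
      daTarget Q (daStep Q prio q σ) j = some s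
  · have hle : cntB pr (daTarget Q σ) n s ≤ cntB pr (daTarget Q (daStep Q prio q σ)) n s := by
      apply Finset.card_le_card
      intro x hx
      rw [Finset.mem_filter] at hx ⊢
      exact ⟨hx.1, hx.2.1, hall x hx.2.1 hx.2.2⟩
    omega
  · push_neg at hall
    obtain ⟨j, hjn, hjs, hjns⟩ := hall
    have hnh : j ∉ daHeld Q prio q σ s := fun hh => hjns (held_persist Q prio q hh)
    obtain ⟨hcard, hbefore⟩ := reject_full Q prio q pr hpr hc σ hjs hnh
    have hsub : (daHeld Q prio q σ s).toFinset ⊆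
        Finset.univ.filter (fun x => pr.idxOf x < n ∧
          daTarget Q (daStep Q prio q σ) x = some s) := by
      intro x hx
      rw [List.mem_toFinset] at hx
      exact Finset.mem_filter.2 ⟨Finset.mem_univ x,
        (hbefore x hx).trans hjn, held_persist Q prio q hx⟩
    have hq : q s ≤ cntB pr (daTarget Q (daStep Q prio q σ)) n s :=
      hcard ▸ Finset.card_le_card hsub
    omega

lemma min_tcnt_chain (hpr : ValidPrio pr) (hc : ∀ s, prio s = pr) (σ : I → ℕ) (s : S) (n : ℕ) :
    ∀ r : ℕ, min (q s) (cntB pr (daTarget Q σ) n s) ≤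
      min (q s) (cntB pr (daTarget Q ((daStep Q prio q)^[r] σ)) n s) := by
  intro r
  induction r with
  | zero => simp
  | succ r ih =>
    rw [Function.iterate_succ_apply']
    exact ih.trans (min_tcnt_mono Q prio q pr hpr hc _ s n)

end DA

section GSGreedy

variable (Q : I → List (Option S)) (prio : S → List I) (q : S → ℕ) (pr : List I)

/-- The terminal state of deferred acceptance. -/
def daFinal : I → ℕ :=
  (daStep Q prio q)^[Fintype.card I * Fintype.card S + 1] (fun _ => 0)

lemma GS_eq_target (hQn : ∀ i, (acceptables (Q i)).Nodup) (i : I) :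
    GS Q prio q i = daTarget Q (daFinal Q prio q) i := by
  have hfix : daStep Q prio q (daFinal Q prio q) = daFinal Q prio q :=
    gs_fixed Q prio q hQn
  show (match daTarget Q (daFinal Q prio q) i with
    | none => none
    | some s => if i ∈ daHeld Q prio q (daFinal Q prio q) s then some s else none)
      = daTarget Q (daFinal Q prio q) i
  cases h : daTarget Q (daFinal Q prio q) i with
  | none => rfl
  | some s =>
    have hheld : i ∈ daHeld Q prio q (daFinal Q prio q) s := by
      by_contra hh
      have h2 := daStep_eq_of_rej Q prio q h hh
      have h3 := congrFun hfix i
      omega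
    simp [hheld]

lemma GS_some_iff (hQn : ∀ i, (acceptables (Q i)).Nodup) (j : I) (s : S) :
    GS Q prio q j = some s ↔ daTarget Q (daFinal Q prio q) j = some s := by
  rw [GS_eq_target Q prio q hQn]

lemma GS_mem_held (hQn : ∀ i, (acceptables (Q i)).Nodup) {j : I} {s : S}
    (h : GS Q prio q j = some s) : j ∈ daHeld Q prio q (daFinal Q prio q) s := by
  have hfix : daStep Q prio q (daFinal Q prio q) = daFinal Q prio q :=
    gs_fixed Q prio q hQn
  rw [GS_some_iff Q prio q hQn] at h
  by_contra hh
  have h2 := daStep_eq_of_rej Q prio q h hh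
  have h3 := congrFun hfix j
  omega

lemma cntB_GS_eq (hQn : ∀ i, (acceptables (Q i)).Nodup) (n : ℕ) (s : S) :
    cntB pr (GS Q prio q) n s = cntB pr (daTarget Q (daFinal Q prio q)) n s := by
  unfold cntB
  congr 1
  apply Finset.filter_congr
  intro j _
  rw [GS_eq_target Q prio q hQn]

lemma greedy_GS (hQn : ∀ i, (acceptables (Q i)).Nodup) (hpr : ValidPrio pr)
    (hc : ∀ s, prio s = pr) : Greedy pr q Q (GS Q prio q) := by
  intro i
  set σ := daFinal Q prio q with hσdef
  have hσit : σ = (daStep Q prio q)^[Fintype.card I * Fintype.card S + 1] (fun _ => 0) := rfl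
  have hfix : daStep Q prio q σ = σ := gs_fixed Q prio q hQn
  refine ⟨σ i, ?_, ?_, ?_, ?_⟩
  · rw [hσit]; exact daStep_iter_bound Q prio q _ i
  · rw [GS_eq_target Q prio q hQn, daTarget_def]
  · -- all schools listed before position `σ i` are full with higher-priority students
    intro t ht s hts
    -- find the round at which `i` was rejected by `s`
    have hstep : ∀ r : ℕ, (daStep Q prio q)^[r+1] (fun _ => 0) i =
        (daStep Q prio q)^[r] (fun _ => 0) i ∨
        (daStep Q prio q)^[r+1] (fun _ => 0) i =
        (daStep Q prio q)^[r] (fun _ => 0) i + 1 := by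
      intro r
      rw [Function.iterate_succ_apply']
      cases daStep_cases Q prio q ((daStep Q prio q)^[r] (fun _ => 0)) i with
      | inl h => exact Or.inl h
      | inr h => exact Or.inr h.1
    obtain ⟨r, hrN, hr1, hr2⟩ := exists_increment
      (fun r => (daStep Q prio q)^[r] (fun _ => 0) i) rfl hstep
      (Fintype.card I * Fintype.card S + 1) t (by rw [hσit] at ht; exact ht)
    have hr1' : (daStep Q prio q)^[r] (fun _ => 0) i = t := hr1
    have hr2' : (daStep Q prio q)^[r+1] (fun _ => 0) i =
        (daStep Q prio q)^[r] (fun _ => 0) i + 1 := hr2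
    have hTr : daTarget Q ((daStep Q prio q)^[r] (fun _ => 0)) i = some s := by
      rw [daTarget_def, hr1']
      exact hts
    have hrej : i ∉ daHeld Q prio q ((daStep Q prio q)^[r] (fun _ => 0)) s := by
      intro hh
      have h4 := daStep_eq_of_held Q prio q hTr hh
      have h5 : (daStep Q prio q)^[r+1] (fun _ => 0) i
          = daStep Q prio q ((daStep Q prio q)^[r] (fun _ => 0)) i := by
        rw [Function.iterate_succ_apply']
      omega
    obtain ⟨hcard, hbefore⟩ := reject_full Q prio q pr hpr hc _ hTr hrej
    have hsub : (daHeld Q prio q ((daStep Q prio q)^[r] (fun _ => 0)) s).toFinset ⊆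
        Finset.univ.filter (fun x => pr.idxOf x < pr.idxOf i ∧
          daTarget Q ((daStep Q prio q)^[r] (fun _ => 0)) x = some s) := by
      intro x hx
      rw [List.mem_toFinset] at hx
      exact Finset.mem_filter.2 ⟨Finset.mem_univ x, hbefore x hx,
        mem_daHeld_target Q prio q hx⟩
    have hq : q s ≤ cntB pr (daTarget Q ((daStep Q prio q)^[r] (fun _ => 0)))
        (pr.idxOf i) s :=
      hcard ▸ Finset.card_le_card hsub
    have hchain := min_tcnt_chain Q prio q pr hpr hc
      ((daStep Q prio q)^[r] (fun _ => 0)) s (pr.idxOf i)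
      (Fintype.card I * Fintype.card S + 1 - r)
    rw [← Function.iterate_add_apply] at hchain
    have hradd : Fintype.card I * Fintype.card S + 1 - r + r =
        Fintype.card I * Fintype.card S + 1 := by omega
    rw [hradd, ← hσit] at hchain
    rw [cntB_GS_eq Q prio q pr hQn, ← hσdef]
    omega
  · -- the school at position `σ i` (if matched) has a free seat among
    -- higher-priority students
    intro s hs
    have hT : daTarget Q σ i = some s := by rw [daTarget_def]; exact hs
    have hheld : i ∈ daHeld Q prio q σ s := by
      by_contra hh
      have h2 := daStep_eq_of_rej Q prio q hT hh
      have h3 := congrFun hfix i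
      omega
    have hnodup := daHeld_nodup Q prio q pr hpr hc σ s
    have hlen := daHeld_length_le Q prio q σ s
    have hmemT : i ∈ (daHeld Q prio q σ s).toFinset := List.mem_toFinset.2 hheld
    have hsub : Finset.univ.filter (fun x => pr.idxOf x < pr.idxOf i ∧
        GS Q prio q x = some s) ⊆ (daHeld Q prio q σ s).toFinset.erase i := by
      intro x hx
      rw [Finset.mem_filter] at hx
      refine Finset.mem_erase.2 ⟨?_, List.mem_toFinset.2 (GS_mem_held Q prio q hQn hx.2.2)⟩
      intro hxi
      rw [hxi] at hx
      omega
    have hcard : (Finset.univ.filter (fun x => pr.idxOf x < pr.idxOf i ∧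
        GS Q prio q x = some s)).card ≤ (daHeld Q prio q σ s).toFinset.card - 1 := by
      have := Finset.card_le_card hsub
      rw [Finset.card_erase_of_mem hmemT] at this
      exact this
    have hlen1 : 1 ≤ (daHeld Q prio q σ s).length := List.length_pos_iff.2 (fun hnil => by
      rw [hnil] at hheld; simp at hheld)
    have hTF : (daHeld Q prio q σ s).toFinset.card = (daHeld Q prio q σ s).length :=
      List.toFinset_card_of_nodup hnodup
    unfold cntB
    omega

end GSGreedy

/-! ### The counting invariant between two greedy outcomes -/

lemma idxOf_eq_iff_eq_of_valid {pr : List I} (hpr : ValidPrio pr) {i j : I}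
    (h : pr.idxOf i = pr.idxOf j) : i = j := by
  have hi := idx_getElem? (hpr.2 i)
  have hj := idx_getElem? (hpr.2 j)
  rw [h] at hi
  rw [hi] at hj
  exact Option.some.inj hj

lemma cntB_succ_lt (pr : List I) (hpr : ValidPrio pr) (μ : I → Option S) {n : ℕ}
    (hn : n < pr.length) (s : S) :
    cntB pr μ (n+1) s = cntB pr μ n s + (if μ (pr[n]'hn) = some s then 1 else 0) := by
  have hidx : pr.idxOf (pr[n]'hn) = n := idx_getElem hpr.1 n hn
  by_cases hs : μ (pr[n]'hn) = some s
  · rw [if_pos hs]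
    have hset : Finset.univ.filter (fun j => pr.idxOf j < n + 1 ∧ μ j = some s) =
        insert (pr[n]'hn) (Finset.univ.filter (fun j => pr.idxOf j < n ∧ μ j = some s)) := by
      ext j
      simp only [Finset.mem_filter, Finset.mem_insert, Finset.mem_univ, true_and]
      constructor
      · rintro ⟨hj1, hj2⟩
        by_cases hjn : pr.idxOf j = n
        · exact Or.inl (idxOf_eq_iff_eq_of_valid hpr (hjn.trans hidx.symm))
        · exact Or.inr ⟨by omega, hj2⟩
      · rintro (rfl | ⟨hj1, hj2⟩)
        · exact ⟨by rw [hidx]; omega, hs⟩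
        · exact ⟨by omega, hj2⟩
    rw [cntB, cntB, hset, Finset.card_insert_of_notMem (by
      simp only [Finset.mem_filter, Finset.mem_univ, true_and]
      rintro ⟨hlt, -⟩
      omega)]
  · rw [if_neg hs]
    have hset : Finset.univ.filter (fun j => pr.idxOf j < n + 1 ∧ μ j = some s) =
        Finset.univ.filter (fun j => pr.idxOf j < n ∧ μ j = some s) := by
      ext j
      simp only [Finset.mem_filter, Finset.mem_univ, true_and]
      constructor
      · rintro ⟨hj1, hj2⟩
        refine ⟨?_, hj2⟩
        by_cases hjn : pr.idxOf j = n
        · exact absurd (idxOf_eq_iff_eq_of_valid hpr (hjn.trans hidx.symm) ▸ hj2) hs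
        · omega
      · rintro ⟨hj1, hj2⟩
        exact ⟨by omega, hj2⟩
    rw [cntB, cntB, hset, Nat.add_zero]

lemma cntB_succ_ge (pr : List I) (hpr : ValidPrio pr) (μ : I → Option S) {n : ℕ}
    (hn : pr.length ≤ n) (s : S) :
    cntB pr μ (n+1) s = cntB pr μ n s := by
  unfold cntB
  congr 1
  ext j
  simp only [Finset.mem_filter, Finset.mem_univ, true_and]
  have := idx_lt_length_iff.2 (hpr.2 j)
  constructor
  · rintro ⟨h1, h2⟩; exact ⟨by omega, h2⟩
  · rintro ⟨h1, h2⟩; exact ⟨by omega, h2⟩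

lemma cnt_le_of_greedy (pr : List I) (hpr : ValidPrio pr) (q : S → ℕ)
    (Qk Ql : I → List (Option S)) (μk μl : I → Option S)
    (hGk : Greedy pr q Qk μk) (hGl : Greedy pr q Ql μl)
    (hpre : ∀ i, acceptables (Ql i) <+: acceptables (Qk i)) :
    ∀ n s, cntB pr μl n s ≤ cntB pr μk n s := by
  intro n
  induction n with
  | zero =>
    intro s
    have h0 : cntB pr μl 0 s = 0 := by
      rw [cntB, Finset.card_eq_zero]
      ext j; simp
    omega
  | succ n ih =>
    intro s
    by_cases hn : n < pr.length
    · rw [cntB_succ_lt pr hpr μl hn s, cntB_succ_lt pr hpr μk hn s]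
      set i := pr[n]'hn with hi
      have hidx : pr.idxOf i = n := idx_getElem hpr.1 n hn
      by_cases hls : μl i = some s
      · by_cases hks : μk i = some s
        · rw [if_pos hls, if_pos hks]
          exact Nat.add_le_add_right (ih s) 1
        · -- hard case: `i` takes `s` under `l` but not under `k`
          rw [if_pos hls, if_neg hks]
          obtain ⟨ml, hmll, hμl, hfulll, havaill⟩ := hGl i
          obtain ⟨mk, hmlk, hμk, hfullk, havailk⟩ := hGk i
          by_cases hqk : q s ≤ cntB pr μk n s
          · have havs : cntB pr μl (pr.idxOf i) s < q s :=
              havaill s (by rw [← hμl]; exact hls)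
            rw [hidx] at havs
            omega
          · exfalso
            push_neg at hqk
            have hml_lt : ml < (acceptables (Ql i)).length := by
              by_contra hcon
              rw [hμl, List.getElem?_eq_none (le_of_not_gt hcon)] at hls
              exact nomatch hls
            have hval_l : (acceptables (Ql i))[ml]'hml_lt = s := by
              have := hμl.symm.trans hls
              rw [List.getElem?_eq_getElem hml_lt] at this
              exact Option.some.inj this
            have hlenle : (acceptables (Ql i)).length ≤ (acceptables (Qk i)).length :=
              (hpre i).length_le
            rcases lt_trichotomy mk ml with hlt | heq | hgt
            · -- mk < ml
              have hmk_ltl : mk < (acceptables (Ql i)).length := lt_trans hlt hml_lt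
              have hmk_ltk : mk < (acceptables (Qk i)).length := lt_of_lt_of_le hmk_ltl hlenle
              have hxeq : (acceptables (Ql i))[mk]'hmk_ltl =
                  (acceptables (Qk i))[mk]'hmk_ltk := (hpre i).getElem hmk_ltl
              set x := (acceptables (Ql i))[mk]'hmk_ltl with hx
              have hfull := hfulll mk hlt x (by rw [List.getElem?_eq_getElem hmk_ltl])
              have havail := havailk x
                (by rw [List.getElem?_eq_getElem hmk_ltk, ← hxeq])
              rw [hidx] at hfull havail
              have := ih x
              omega
            · -- mk = ml : then μk i = some s, contradiction
              apply hks
              rw [hμk, heq, List.getElem?_eq_getElem (lt_of_lt_of_le hml_lt hlenle)]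
              rw [← (hpre i).getElem hml_lt, hval_l]
            · -- ml < mk
              have hfull := hfullk ml hgt s (by
                rw [List.getElem?_eq_getElem (lt_of_lt_of_le hml_lt hlenle),
                  ← (hpre i).getElem hml_lt, hval_l])
              rw [hidx] at hfull
              omega
      · rw [if_neg hls]
        have h1 := ih s
        by_cases hks : μk i = some s
        · rw [if_pos hks]; omega
        · rw [if_neg hks]; omega
    · rw [cntB_succ_ge pr hpr μl (le_of_not_gt hn) s, cntB_succ_ge pr hpr μk (le_of_not_gt hn) s]
      exact ih s

/-! ### Blocking characterization and counting -/

lemma idx_take_eq {α : Type*} [BEq α] [LawfulBEq α] [DecidableEq α]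
    {a : List α} {nn : ℕ} {u : α} (hu : u ∈ a.take nn) :
    a.idxOf u = (a.take nn).idxOf u := by
  conv_lhs => rw [← List.take_append_drop nn a]
  rw [idx_append_mem _ hu]

lemma mem_take_iff_idx_lt {α : Type*} [BEq α] [LawfulBEq α] [DecidableEq α]
    {a : List α} (hnd : a.Nodup) {x : α} (hx : x ∈ a) (nn : ℕ) :
    x ∈ a.take nn ↔ a.idxOf x < nn := by
  constructor
  · intro h
    obtain ⟨t, ht, hval⟩ := List.getElem_of_mem h
    have htn : t < nn := by
      have := ht
      rw [List.length_take] at this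
      omega
    have hq : a[t]? = some x := by
      rw [← List.getElem?_take_of_lt htn, List.getElem?_eq_getElem ht, hval]
    exact (getElem?_eq_some_idx hnd hq) ▸ htn
  · intro h
    have hq : (a.take nn)[a.idxOf x]? = some x := by
      rw [List.getElem?_take_of_lt h]
      exact idx_getElem? hx
    exact mem_of_getElem?_eq_some hq

lemma exists_lower (pr : List I) (hpr : ValidPrio pr) (q : S → ℕ) (μ : I → Option S)
    (i : I) (s : S) (hne : μ i ≠ some s)
    (h1 : cntB pr μ (pr.idxOf i) s < q s)
    (h2 : q s ≤ (Finset.univ.filter (fun j => μ j = some s)).card) :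
    ∃ j, μ j = some s ∧ prioLt pr i j := by
  by_contra hcon
  push_neg at hcon
  have hsub : Finset.univ.filter (fun j => μ j = some s) ⊆
      Finset.univ.filter (fun j => pr.idxOf j < pr.idxOf i ∧ μ j = some s) := by
    intro j hj
    rw [Finset.mem_filter] at hj ⊢
    refine ⟨hj.1, ?_, hj.2⟩
    have hle : ¬ prioLt pr i j := hcon j hj.2
    rw [prioLt, not_lt] at hle
    have hne2 : pr.idxOf j ≠ pr.idxOf i :=
      fun he => hne ((idxOf_eq_iff_eq_of_valid hpr he) ▸ hj.2)
    omega
  have := Finset.card_le_card hsub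
  unfold cntB at h1
  omega

lemma blocking_char (P : I → List (Option S)) (prio : S → List I) (q : S → ℕ)
    (pr : List I) (hpr : ValidPrio pr) (hc : ∀ s, prio s = pr)
    (hP : ∀ i, ValidPref (P i))
    (Q : I → List (Option S)) (μ : I → Option S) (hG : Greedy pr q Q μ)
    (hpre : ∀ i, ∃ nn, acceptables (Q i) = (acceptables (P i)).take nn) (i : I) :
    BlockingStudent P prio q μ i ↔
      (μ i = none ∧ ∃ s ∈ acceptables (P i), cntB pr μ (pr.idxOf i) s < q s) := by
  obtain ⟨nn, hnn⟩ := hpre i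
  have haccnd : (acceptables (P i)).Nodup := acceptables_nodup (hP i)
  constructor
  · rintro ⟨s, hpref, hor⟩
    have havail : cntB pr μ (pr.idxOf i) s < q s := by
      cases hor with
      | inl hfree =>
        refine lt_of_le_of_lt ?_ hfree
        apply Finset.card_le_card
        intro x hx
        rw [Finset.mem_filter] at hx ⊢
        exact ⟨hx.1, hx.2.2⟩
      | inr hex =>
        obtain ⟨j, hjs, hji⟩ := hex
        obtain ⟨mj, hmj, hμj, hfullj, havailj⟩ := hG j
        have hj2 : cntB pr μ (pr.idxOf j) s < q s :=
          havailj s (by rw [← hμj]; exact hjs)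
        have hij : pr.idxOf i < pr.idxOf j := by
          have h := hji
          rw [prioLt, hc s] at h
          exact h
        exact lt_of_le_of_lt (cntB_mono_n pr μ (le_of_lt hij) s) hj2
    have hnone : μ i = none := by
      by_contra hne
      obtain ⟨m, hmle, hμi, hfull, havailm⟩ := hG i
      obtain ⟨x, hx⟩ := Option.ne_none_iff_exists'.1 hne
      have hgx : (acceptables (Q i))[m]? = some x := by rw [← hμi]; exact hx
      have hxmemQ : x ∈ acceptables (Q i) := mem_of_getElem?_eq_some hgx
      have hxmemP : x ∈ acceptables (P i) := by
        rw [hnn] at hxmemQ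
        exact List.mem_of_mem_take hxmemQ
      rw [hx] at hpref
      have hsP : s ∈ acceptables (P i) := by
        by_contra hsno
        have h2 := prefLt_of_acc_notacc (hP i) hxmemP hsno
        rw [prefLt] at h2 hpref
        omega
      have hPlt : (acceptables (P i)).idxOf s < (acceptables (P i)).idxOf x :=
        (acc_idxOf_lt_iff (hP i) hsP hxmemP).2 hpref
      by_cases hsQ : s ∈ acceptables (Q i)
      · have hQnd : (acceptables (Q i)).Nodup := by
          rw [hnn]
          exact haccnd.sublist (List.take_sublist _ _)
        have hmidx : (acceptables (Q i)).idxOf x = m := getElem?_eq_some_idx hQnd hgx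
        have hPidx_x : (acceptables (P i)).idxOf x = (acceptables (Q i)).idxOf x := by
          rw [hnn]
          exact idx_take_eq (hnn ▸ hxmemQ)
        have hPidx_s : (acceptables (P i)).idxOf s = (acceptables (Q i)).idxOf s := by
          rw [hnn]
          exact idx_take_eq (hnn ▸ hsQ)
        have hts : (acceptables (Q i)).idxOf s < m := by omega
        have hfull2 := hfull _ hts s (idx_getElem? hsQ)
        omega
      · have hxin : (acceptables (P i)).idxOf x < nn := by
          rw [hnn] at hxmemQ
          exact (mem_take_iff_idx_lt haccnd hxmemP nn).1 hxmemQ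
        have hsout : ¬ (acceptables (P i)).idxOf s < nn := by
          intro hcon
          exact hsQ (by rw [hnn]; exact (mem_take_iff_idx_lt haccnd hsP nn).2 hcon)
        omega
    refine ⟨hnone, s, ?_, havail⟩
    rw [hnone] at hpref
    exact (mem_acceptables_iff_lt_none (hP i)).2 hpref
  · rintro ⟨hnone, s, hsP, havail⟩
    refine ⟨s, ?_, ?_⟩
    · rw [hnone]
      exact (mem_acceptables_iff_lt_none (hP i)).1 hsP
    · by_cases htot : (Finset.univ.filter (fun j => μ j = some s)).card < q s
      · exact Or.inl htot
      · refine Or.inr ?_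
        obtain ⟨j, hj1, hj2⟩ := exists_lower pr hpr q μ i s
          (by rw [hnone]; exact fun h => nomatch h) havail (le_of_not_gt htot)
        refine ⟨j, hj1, ?_⟩
        show prioLt (prio s) i j
        rw [prioLt, hc s]
        exact hj2

lemma card_count {Bk Bl mk ml : Finset I}
    (h1 : Bk \ Bl ⊆ ml \ mk) (h2 : mk \ ml ⊆ Bl \ Bk) (h3 : ml.card ≤ mk.card) :
    Bk.card ≤ Bl.card := by
  have e1 := Finset.card_le_card h1
  have e2 := Finset.card_le_card h2
  have e3 := Finset.card_sdiff_add_card_inter ml mk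
  have e4 := Finset.card_sdiff_add_card_inter mk ml
  have e5 := Finset.card_sdiff_add_card_inter Bk Bl
  have e6 := Finset.card_sdiff_add_card_inter Bl Bk
  have hi1 : (ml ∩ mk).card = (mk ∩ ml).card := by rw [Finset.inter_comm]
  have hi2 : (Bk ∩ Bl).card = (Bl ∩ Bk).card := by rw [Finset.inter_comm]
  omega

lemma card_matched_eq_sum (pr : List I) (hpr : ValidPrio pr) (μ : I → Option S) (s₀ : S) :
    (Finset.univ.filter (fun i : I => μ i ≠ none)).card = ∑ s : S, cntB pr μ pr.length s := by
  classical
  have hcnt : ∀ s, cntB pr μ pr.length s =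
      (Finset.univ.filter (fun j => μ j = some s)).card := by
    intro s
    unfold cntB
    congr 1
    ext j
    simp only [Finset.mem_filter, Finset.mem_univ, true_and]
    have hm := idx_lt_length_iff.2 (hpr.2 j)
    exact ⟨fun h => h.2, fun h => ⟨hm, h⟩⟩
  rw [Finset.sum_congr rfl (fun s _ => hcnt s)]
  rw [Finset.card_eq_sum_card_fiberwise
    (f := fun i => (μ i).getD s₀) (t := Finset.univ) (fun x _ => Finset.mem_univ _)]
  apply Finset.sum_congr rfl
  intro s _
  congr 1
  ext j
  simp only [Finset.mem_filter, Finset.mem_univ, true_and]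
  cases hj : μ j <;> simp [hj]


/-- Theorem 4: for `k > ℓ > 1`, sincere students (complement of `M`)
and sophisticated students `M`, and any problem with common priority, the Nash
equilibrium outcome `SD(P^ℓ_N, P_M, ≻, q)` of `(SD^ℓ, P)` has at least as many blocking
students under `(P,≻,q)` as the Nash equilibrium outcome `SD(P^k_N, P_M, ≻, q)` of
`(SD^k, P)`. -/
theorem sdk_counting_with_sincere_and_sophisticated
    {I S : Type*} [Fintype I] [DecidableEq I] [Fintype S] [DecidableEq S]
    (hIS : Fintype.card S < Fintype.card I)
    (k l : ℕ) (hl : 1 < l) (hlk : l < k) (M : Finset I)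
    (P : I → List (Option S)) (prio : S → List I) (q : S → ℕ)
    (hP : ∀ i, ValidPref (P i)) (hprio : ∀ s, ValidPrio (prio s))
    (hcp : ∀ s s' : S, prio s = prio s') :
    numBlocking P prio q
        (GS (fun i => if i ∈ M then P i else truncate (P i) k) prio q) ≤
      numBlocking P prio q
        (GS (fun i => if i ∈ M then P i else truncate (P i) l) prio q) := by
  classical
  rcases isEmpty_or_nonempty S with hS | hS
  · have hempty : ∀ (μ : I → Option S), numBlocking P prio q μ = 0 := by
      intro μ
      unfold numBlocking
      have hset : {i : I | BlockingStudent P prio q μ i} = ∅ := by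
        ext i
        simp only [Set.mem_setOf_eq, Set.mem_empty_iff_false, iff_false]
        rintro ⟨s, -⟩
        exact hS.false s
      rw [hset, Set.ncard_empty]
    rw [hempty, hempty]
  · obtain ⟨s₀⟩ := hS
    set pr := prio s₀ with hprdef
    have hc : ∀ s, prio s = pr := fun s => hcp s s₀
    have hpr : ValidPrio pr := hprio s₀
    set Qk := fun i => if i ∈ M then P i else truncate (P i) k with hQkdef
    set Ql := fun i => if i ∈ M then P i else truncate (P i) l with hQldef
    set μk := GS Qk prio q with hμkdef
    set μl := GS Ql prio q with hμldef
    have hPnd : ∀ i, (acceptables (P i)).Nodup := fun i => acceptables_nodup (hP i)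
    have hpreK : ∀ i, ∃ nn, acceptables (Qk i) = (acceptables (P i)).take nn := by
      intro i
      by_cases h : i ∈ M
      · exact ⟨(acceptables (P i)).length, by
          simp only [hQkdef, h, if_pos, List.take_length]⟩
      · exact ⟨k, by simp only [hQkdef, h, if_neg, ite_false, acceptables_truncate]⟩
    have hpreL : ∀ i, ∃ nn, acceptables (Ql i) = (acceptables (P i)).take nn := by
      intro i
      by_cases h : i ∈ M
      · exact ⟨(acceptables (P i)).length, by
          simp only [hQldef, h, if_pos, List.take_length]⟩
      · exact ⟨l, by simp only [hQldef, h, if_neg, ite_false, acceptables_truncate]⟩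
    have hQknd : ∀ i, (acceptables (Qk i)).Nodup := by
      intro i
      obtain ⟨nn, hnn⟩ := hpreK i
      rw [hnn]
      exact (hPnd i).sublist (List.take_sublist _ _)
    have hQlnd : ∀ i, (acceptables (Ql i)).Nodup := by
      intro i
      obtain ⟨nn, hnn⟩ := hpreL i
      rw [hnn]
      exact (hPnd i).sublist (List.take_sublist _ _)
    have hGk : Greedy pr q Qk μk := greedy_GS Qk prio q pr hQknd hpr hc
    have hGl : Greedy pr q Ql μl := greedy_GS Ql prio q pr hQlnd hpr hc
    have hprefix : ∀ i, acceptables (Ql i) <+: acceptables (Qk i) := by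
      intro i
      by_cases h : i ∈ M
      · have h1 : Ql i = P i := by simp [hQldef, h]
        have h2 : Qk i = P i := by simp [hQkdef, h]
        rw [h1, h2]
      · have h1 : acceptables (Ql i) = (acceptables (P i)).take l := by
          simp [hQldef, h, acceptables_truncate]
        have h2 : acceptables (Qk i) = (acceptables (P i)).take k := by
          simp [hQkdef, h, acceptables_truncate]
        have h3 : (acceptables (P i)).take l = ((acceptables (P i)).take k).take l := by
          rw [List.take_take, min_eq_left (le_of_lt hlk)]
        rw [h1, h2, h3]
        exact List.take_prefix _ _
    have hinv : ∀ n s, cntB pr μl n s ≤ cntB pr μk n s :=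
      cnt_le_of_greedy pr hpr q Qk Ql μk μl hGk hGl hprefix
    have hcharK := fun i => blocking_char P prio q pr hpr hc hP Qk μk hGk hpreK i
    have hcharL := fun i => blocking_char P prio q pr hpr hc hP Ql μl hGl hpreL i
    have hnum : ∀ (μ : I → Option S), numBlocking P prio q μ =
        (Finset.univ.filter (fun i => BlockingStudent P prio q μ i)).card := by
      intro μ
      unfold numBlocking
      rw [show {i : I | BlockingStudent P prio q μ i} =
          ↑(Finset.univ.filter (fun i => BlockingStudent P prio q μ i)) by
        ext i; simp]
      rw [Set.ncard_coe_finset]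
    rw [hnum, hnum]
    refine card_count (mk := Finset.univ.filter (fun i => μk i ≠ none))
      (ml := Finset.univ.filter (fun i => μl i ≠ none)) ?_ ?_ ?_
    · -- Bk \ Bl ⊆ ml \ mk
      intro i hi
      simp only [Finset.mem_sdiff, Finset.mem_filter, Finset.mem_univ, true_and] at hi ⊢
      obtain ⟨hBk, hnotBl⟩ := hi
      rw [hcharK i] at hBk
      obtain ⟨hknone, s, hsP, hkavail⟩ := hBk
      constructor
      · intro hlnone
        apply hnotBl
        rw [hcharL i]
        exact ⟨hlnone, s, hsP, lt_of_le_of_lt (hinv _ s) hkavail⟩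
      · simp [hknone]
    · -- mk \ ml ⊆ Bl \ Bk
      intro i hi
      simp only [Finset.mem_sdiff, Finset.mem_filter, Finset.mem_univ, true_and,
        not_not] at hi ⊢
      obtain ⟨hkne, hlnone⟩ := hi
      obtain ⟨x, hx⟩ := Option.ne_none_iff_exists'.1 hkne
      obtain ⟨m, hmle, hμi, hfull, havailm⟩ := hGk i
      have hgx : (acceptables (Qk i))[m]? = some x := by rw [← hμi]; exact hx
      have hxmemQ : x ∈ acceptables (Qk i) := mem_of_getElem?_eq_some hgx
      obtain ⟨nn, hnn⟩ := hpreK i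
      have hxmemP : x ∈ acceptables (P i) := by
        rw [hnn] at hxmemQ
        exact List.mem_of_mem_take hxmemQ
      have hkavail : cntB pr μk (pr.idxOf i) x < q x := havailm x hgx
      constructor
      · rw [hcharL i]
        exact ⟨hlnone, x, hxmemP, lt_of_le_of_lt (hinv _ x) hkavail⟩
      · intro hBk
        rw [hcharK i] at hBk
        rw [hBk.1] at hx
        exact nomatch hx
    · -- |matched l| ≤ |matched k|
      rw [card_matched_eq_sum pr hpr μl s₀, card_matched_eq_sum pr hpr μk s₀]
      exact Finset.sum_le_sum (fun s _ => hinv pr.length s)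


end SchoolChoice
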